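/- Let 𝒵 be a finite set and P₀ a strictly positive pmf on 𝒵. For every η > 0 there exists ε₀ > 0 such that for all 0 < ε < ε₀ and all pmfs P₁, P₂ on 𝒵 satisfying Σ_z (P_i(z) − P₀(z))²/P₀(z) ≤ ε² for i = 1,2, both P₁ and P₂ are strictly positive, the KL divergence D(P₁‖P₂) = Σ_z P₁(z)·log(P₁(z)/P₂(z)) is finite, and |D(P₁‖P₂) − (1/2)·Σ_z (P₁(z) − P₂(z))²/P₀(z)| ≤ η·ε². -/

import Mathlib

lemma lemA (u : ℝ) (hu : |u| ≤ 1/2) :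
    |(1+u) * Real.log (1+u) - u - u^2/2| ≤ 4 * |u|^3 := by
  have h1 : |(-u)| < 1 := by rw [abs_neg]; linarith
  have h := Real.abs_log_sub_add_sum_range_le h1 2
  have hsum2 : (∑ i ∈ Finset.range 2, (-u) ^ (i + 1) / ((i : ℝ) + 1)) = -u + u^2/2 := by
    simp [Finset.sum_range_succ]; ring
  rw [hsum2, show (1:ℝ) - -u = 1+u by ring, abs_neg] at h
  have h2 : |u|^3 / (1 - |u|) ≤ 2 * |u|^3 := by
    rw [div_le_iff₀ (by linarith)]
    nlinarith [pow_nonneg (abs_nonneg u) 3]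
  have hE : |Real.log (1+u) - u + u^2/2| ≤ 2 * |u|^3 := by
    rw [show Real.log (1+u) - u + u^2/2 = -u + u^2/2 + Real.log (1+u) by ring]
    exact h.trans h2
  have hid : (1+u) * Real.log (1+u) - u - u^2/2
      = (1+u) * (Real.log (1+u) - u + u^2/2) - u^3/2 := by ring
  rw [hid]
  have h1u : |1+u| ≤ 3/2 := by
    rw [abs_le] at hu ⊢; constructor <;> linarith [hu.1, hu.2]
  calc |(1+u) * (Real.log (1+u) - u + u^2/2) - u^3/2|
      ≤ |1+u| * |Real.log (1+u) - u + u^2/2| + |u^3/2| := by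
        rw [← abs_mul]; exact abs_sub _ _
    _ ≤ (3/2) * (2*|u|^3) + |u|^3/2 := by
        have : |u^3/2| = |u|^3/2 := by rw [abs_div, abs_pow]; norm_num
        rw [this]
        gcongr
    _ ≤ 4 * |u|^3 := by nlinarith [pow_nonneg (abs_nonneg u) 3]

set_option maxHeartbeats 1000000 in
lemma ptw (P0z p q ε m : ℝ) (hm : 0 < m) (hmP : m ≤ P0z) (hP1 : P0z ≤ 1)
    (hε : 0 < ε) (hεm : ε ≤ m/8)
    (hp : |p - P0z| ≤ ε) (hq : |q - P0z| ≤ ε) :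
    |p * Real.log (p/q) - p + q - (p-q)^2/(2*P0z)| ≤ (32/m^2 + 1/m) * ε * ((p-q)^2/P0z) := by
  have hP0pos : 0 < P0z := lt_of_lt_of_le hm hmP
  have hq2 : m/2 ≤ q := by rw [abs_le] at hq; linarith [hq.1]
  have hp2 : m/2 ≤ p := by rw [abs_le] at hp; linarith [hp.1]
  have hq0 : 0 < q := by linarith
  have hp0 : 0 < p := by linarith
  have hq0' : q ≠ 0 := ne_of_gt hq0
  have hP0' : P0z ≠ 0 := ne_of_gt hP0pos
  have hpq : |p - q| ≤ 2*ε := by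
    calc |p - q| ≤ |p - P0z| + |P0z - q| := abs_sub_le _ _ _
      _ ≤ ε + ε := add_le_add hp (by rw [abs_sub_comm]; exact hq)
      _ = 2*ε := by ring
  have hu : |(p-q)/q| ≤ 1/2 := by
    rw [abs_div, abs_of_pos hq0, div_le_iff₀ hq0]
    linarith [hpq]
  have hA := lemA ((p-q)/q) hu
  have h1u : 1 + (p-q)/q = p/q := by field_simp; ring
  rw [h1u] at hA
  have hid : p * Real.log (p/q) - p + q - (p-q)^2/(2*P0z)
      = q * (p/q * Real.log (p/q) - (p-q)/q - ((p-q)/q)^2/2)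
        + ((p-q)^2/(2*q) - (p-q)^2/(2*P0z)) := by
    generalize Real.log (p/q) = L
    field_simp
    ring
  rw [hid]
  have hAbound : |q * (p/q * Real.log (p/q) - (p-q)/q - ((p-q)/q)^2/2)|
      ≤ 32*ε*(p-q)^2/m^2 := by
    rw [abs_mul, abs_of_pos hq0]
    have h3 : |p-q|^3 = (p-q)^2 * |p-q| := by rw [pow_succ, sq_abs]
    have hq2' : m^2/4 ≤ q^2 := by nlinarith
    calc q * |p/q * Real.log (p/q) - (p-q)/q - ((p-q)/q)^2/2|
        ≤ q * (4 * |(p-q)/q|^3) := by gcongr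
      _ = 4 * |p-q|^3 / q^2 := by
          rw [abs_div, abs_of_pos hq0, div_pow]
          field_simp
      _ ≤ 32*ε*(p-q)^2/m^2 := by
          rw [div_le_div_iff₀ (by positivity) (by positivity)]
          have t1 : (p-q)^2 * |p-q| ≤ (p-q)^2 * (2*ε) :=
            mul_le_mul_of_nonneg_left hpq (sq_nonneg (p-q))
          have t2 : (p-q)^2 * |p-q| * m^2 ≤ (p-q)^2 * (2*ε) * m^2 :=
            mul_le_mul_of_nonneg_right t1 (sq_nonneg m)
          have t3 : ε * (p-q)^2 * (m^2/4) ≤ ε * (p-q)^2 * q^2 :=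
            mul_le_mul_of_nonneg_left hq2' (mul_nonneg hε.le (sq_nonneg (p-q)))
          rw [h3]
          nlinarith [t2, t3]
  have hBbound : |(p-q)^2/(2*q) - (p-q)^2/(2*P0z)| ≤ ε * (p-q)^2 / (m * P0z) := by
    have hid2 : (p-q)^2/(2*q) - (p-q)^2/(2*P0z) = (p-q)^2 * (P0z - q) / (2*q*P0z) := by
      field_simp
    rw [hid2, abs_div, abs_mul, abs_of_pos (by positivity : (0:ℝ) < 2*q*P0z), abs_pow, sq_abs]
    rw [div_le_div_iff₀ (by positivity) (by positivity)]
    have hq' : |P0z - q| ≤ ε := by rw [abs_sub_comm]; exact hq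
    have t1 : (p-q)^2 * |P0z - q| ≤ (p-q)^2 * ε :=
      mul_le_mul_of_nonneg_left hq' (sq_nonneg (p-q))
    have t2 : (p-q)^2 * |P0z - q| * (m * P0z) ≤ (p-q)^2 * ε * (m * P0z) :=
      mul_le_mul_of_nonneg_right t1 (by positivity)
    have t3 : ε * (p-q)^2 * P0z * m ≤ ε * (p-q)^2 * P0z * (2*q) :=
      mul_le_mul_of_nonneg_left (by linarith) (by positivity)
    calc (p-q)^2 * |P0z - q| * (m * P0z) ≤ (p-q)^2 * ε * (m * P0z) := t2
      _ = ε * (p-q)^2 * P0z * m := by ring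
      _ ≤ ε * (p-q)^2 * P0z * (2*q) := t3
      _ = ε * (p-q)^2 * (2*q*P0z) := by ring
  calc |q * (p/q * Real.log (p/q) - (p-q)/q - ((p-q)/q)^2/2)
        + ((p-q)^2/(2*q) - (p-q)^2/(2*P0z))|
      ≤ |q * (p/q * Real.log (p/q) - (p-q)/q - ((p-q)/q)^2/2)|
        + |(p-q)^2/(2*q) - (p-q)^2/(2*P0z)| := abs_add_le _ _
    _ ≤ 32*ε*(p-q)^2/m^2 + ε * (p-q)^2 / (m * P0z) := add_le_add hAbound hBbound
    _ ≤ (32/m^2 + 1/m) * ε * ((p-q)^2/P0z) := by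
        have h4 : (p-q)^2 ≤ (p-q)^2/P0z := by
          rw [le_div_iff₀ hP0pos]; nlinarith [sq_nonneg (p-q)]
        have e1 : 32*ε*(p-q)^2/m^2 ≤ (32/m^2) * ε * ((p-q)^2/P0z) := by
          rw [show 32*ε*(p-q)^2/m^2 = (32/m^2) * ε * (p-q)^2 by ring]
          gcongr
        have e2 : ε * (p-q)^2 / (m * P0z) = (1/m) * ε * ((p-q)^2/P0z) := by
          field_simp
        have e3 : (32/m^2 + 1/m) * ε * ((p-q)^2/P0z)
            = (32/m^2) * ε * ((p-q)^2/P0z) + (1/m) * ε * ((p-q)^2/P0z) := by ring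
        rw [e2, e3]
        linarith [e1]



theorem stmt_7 {Z : Type*} [Fintype Z]
    (P0 : Z → ℝ) (hpos : ∀ z, 0 < P0 z) (hsum : ∑ z, P0 z = 1) :
    ∀ η > 0, ∃ ε₀ > 0, ∀ ε : ℝ, 0 < ε → ε < ε₀ →
      ∀ P1 P2 : Z → ℝ,
        (∀ z, 0 ≤ P1 z) → (∑ z, P1 z = 1) →
        (∀ z, 0 ≤ P2 z) → (∑ z, P2 z = 1) →
        (∑ z, (P1 z - P0 z) ^ 2 / P0 z ≤ ε ^ 2) →
        (∑ z, (P2 z - P0 z) ^ 2 / P0 z ≤ ε ^ 2) →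
        (∀ z, 0 < P1 z) ∧ (∀ z, 0 < P2 z) ∧
        |(∑ z, P1 z * Real.log (P1 z / P2 z)) -
            (1 / 2) * ∑ z, (P1 z - P2 z) ^ 2 / P0 z| ≤ η * ε ^ 2 := by
  intro η hη
  have hne : Nonempty Z := by
    by_contra h
    rw [not_nonempty_iff] at h
    rw [Finset.univ_eq_empty, Finset.sum_empty] at hsum
    norm_num at hsum
  set m := Finset.univ.inf' Finset.univ_nonempty P0 with hm_def
  have hm : 0 < m := (Finset.lt_inf'_iff _).2 fun z _ => hpos z
  have hmle : ∀ z, m ≤ P0 z := fun z => Finset.inf'_le _ (Finset.mem_univ z)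
  have hP0le1 : ∀ z, P0 z ≤ 1 := by
    intro z
    rw [← hsum]
    exact Finset.single_le_sum (fun i _ => (hpos i).le) (Finset.mem_univ z)
  have hCpos : 0 < 32/m^2 + 1/m := by positivity
  refine ⟨min (m/8) (η/(4*(32/m^2 + 1/m))), by positivity, ?_⟩
  intro ε hε hεlt P1 P2 h1n h1s h2n h2s hχ1 hχ2
  have hε8 : ε ≤ m/8 := le_of_lt (lt_of_lt_of_le hεlt (min_le_left _ _))
  have hεC : ε ≤ η/(4*(32/m^2 + 1/m)) := le_of_lt (lt_of_lt_of_le hεlt (min_le_right _ _))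
  have key : ∀ (P : Z → ℝ), (∑ z, (P z - P0 z)^2/P0 z ≤ ε^2) → ∀ z, |P z - P0 z| ≤ ε := by
    intro P hχ z
    have h1 : (P z - P0 z)^2 / P0 z ≤ ε^2 := by
      refine le_trans (Finset.single_le_sum (f := fun i => (P i - P0 i)^2/P0 i)
        (fun i _ => div_nonneg (sq_nonneg _) (hpos i).le) (Finset.mem_univ z)) hχ
    rw [div_le_iff₀ (hpos z)] at h1
    have h3 : (P z - P0 z)^2 ≤ ε^2 := by nlinarith [hpos z, hP0le1 z, sq_nonneg ε]
    rw [abs_le]; constructor <;> nlinarith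
  have hk1 := key P1 hχ1
  have hk2 := key P2 hχ2
  have hpos1 : ∀ z, 0 < P1 z := fun z => by
    have h := (abs_le.1 (hk1 z)).1; have := hmle z; linarith
  have hpos2 : ∀ z, 0 < P2 z := fun z => by
    have h := (abs_le.1 (hk2 z)).1; have := hmle z; linarith
  refine ⟨hpos1, hpos2, ?_⟩
  have hsumC : ∑ z, (P1 z - P2 z)^2/P0 z ≤ 4*ε^2 := by
    have hle : ∀ z ∈ Finset.univ,
        (P1 z - P2 z)^2/P0 z
          ≤ 2*((P1 z - P0 z)^2/P0 z) + 2*((P2 z - P0 z)^2/P0 z) := by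
      intro z _
      rw [show 2*((P1 z - P0 z)^2/P0 z) + 2*((P2 z - P0 z)^2/P0 z)
          = (2*(P1 z - P0 z)^2 + 2*(P2 z - P0 z)^2)/P0 z by ring]
      gcongr
      · exact (hpos z).le
      · nlinarith [sq_nonneg (P1 z + P2 z - 2*P0 z)]
    calc ∑ z, (P1 z - P2 z)^2/P0 z
        ≤ ∑ z, (2*((P1 z - P0 z)^2/P0 z) + 2*((P2 z - P0 z)^2/P0 z)) :=
          Finset.sum_le_sum hle
      _ = 2*(∑ z, (P1 z - P0 z)^2/P0 z) + 2*(∑ z, (P2 z - P0 z)^2/P0 z) := by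
          rw [Finset.sum_add_distrib, ← Finset.mul_sum, ← Finset.mul_sum]
      _ ≤ 4*ε^2 := by linarith
  have hdecomp : (∑ z, P1 z * Real.log (P1 z / P2 z)) - (1/2) * ∑ z, (P1 z - P2 z)^2/P0 z
      = ∑ z, (P1 z * Real.log (P1 z / P2 z) - P1 z + P2 z - (P1 z - P2 z)^2/(2*P0 z)) := by
    have e : ∀ z, P1 z * Real.log (P1 z/P2 z) - P1 z + P2 z - (P1 z - P2 z)^2/(2*P0 z)
        = P1 z * Real.log (P1 z/P2 z) - P1 z + P2 z - (1/2)*((P1 z - P2 z)^2/P0 z) := by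
      intro z
      rw [mul_comm (2:ℝ) (P0 z), ← div_div]
      ring
    rw [Finset.sum_congr rfl (fun z _ => e z), Finset.sum_sub_distrib,
      Finset.sum_add_distrib, Finset.sum_sub_distrib, ← Finset.mul_sum, h1s, h2s]
    ring
  rw [hdecomp]
  calc |∑ z, (P1 z * Real.log (P1 z / P2 z) - P1 z + P2 z - (P1 z - P2 z)^2/(2*P0 z))|
      ≤ ∑ z, |P1 z * Real.log (P1 z / P2 z) - P1 z + P2 z - (P1 z - P2 z)^2/(2*P0 z)| :=
        Finset.abs_sum_le_sum_abs _ _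
    _ ≤ ∑ z, (32/m^2 + 1/m) * ε * ((P1 z - P2 z)^2/P0 z) :=
        Finset.sum_le_sum (fun z _ =>
          ptw (P0 z) (P1 z) (P2 z) ε m hm (hmle z) (hP0le1 z) hε hε8 (hk1 z) (hk2 z))
    _ = (32/m^2 + 1/m) * ε * ∑ z, (P1 z - P2 z)^2/P0 z := by rw [← Finset.mul_sum]
    _ ≤ (32/m^2 + 1/m) * ε * (4*ε^2) :=
        mul_le_mul_of_nonneg_left hsumC (by positivity)
    _ ≤ η * ε^2 := by
        have h4C : ε * (4*(32/m^2 + 1/m)) ≤ η := (le_div_iff₀ (by positivity)).1 hεC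
        nlinarith [sq_nonneg ε, hε, hCpos]
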